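/- Let $q \equiv 3 \pmod 4$ be a prime and $r \in \mathbb{N}$. Then $2q^{r+1}$ is the largest positive integer $x$ with $\phi(x) = q^r(q-1)$. -/

import Mathlib

theorem N2_eq_two_q_pow (q r : ℕ) (hq : q.Prime) (hmod : q % 4 = 3) (hr : 1 ≤ r) :
    IsGreatest {x : ℕ | 0 < x ∧ Nat.totient x = q ^ r * (q - 1)} (2 * q ^ (r + 1)) := by
  have hq3 : 3 ≤ q := by omega
  have hq2 : ¬ 2 ∣ q := by omega
  have hqr2 : ¬ 2 ∣ q ^ r := fun h => hq2 (Nat.Prime.dvd_of_dvd_pow Nat.prime_two h)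
  set N := q ^ r * (q - 1) with hN
  obtain ⟨t, ht1, ht2⟩ : ∃ t, q - 1 = 2 * t ∧ ¬ 2 ∣ t := ⟨(q - 1) / 2, by omega, by omega⟩
  have hNsplit : N = 2 * (q ^ r * t) := by rw [hN, ht1]; ring
  have hN4 : ¬ 4 ∣ N := by
    intro h
    have h2 : 2 ∣ q ^ r * t := by omega
    rcases (Nat.prime_two.dvd_mul).1 h2 with h | h
    · exact hqr2 h
    · exact ht2 h
  have hcoq2 : Nat.Coprime 2 (q ^ (r + 1)) :=
    Nat.Coprime.pow_right _ ((Nat.coprime_primes Nat.prime_two hq).2 (by omega))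
  constructor
  · refine ⟨by positivity, ?_⟩
    rw [Nat.totient_mul hcoq2, Nat.totient_two, one_mul,
      Nat.totient_prime_pow hq (by omega)]
    simp
    exact hN.symm
  · rintro x ⟨hx0, hφ⟩
    have hqN : q ∣ N := by
      rw [hN]; exact Dvd.dvd.mul_right (dvd_pow_self q (by omega)) _
    -- there is an odd prime dividing x
    have hxodd : ∃ p, p.Prime ∧ p ∣ x ∧ p ≠ 2 := by
      by_contra h
      push_neg at h
      have hx2 : x = 2 ^ x.primeFactorsList.length :=
        Nat.eq_prime_pow_of_unique_prime_dvd hx0.ne' (fun hd hdvd => h _ hd hdvd)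
      rw [hx2] at hφ
      rcases Nat.eq_zero_or_pos x.primeFactorsList.length with hk | hk
      · rw [hk] at hφ
        simp at hφ
        have := Nat.le_of_dvd (by omega) hqN
        omega
      · rw [Nat.totient_prime_pow Nat.prime_two hk] at hφ
        rw [← hφ] at hqN
        have h1 : q ∣ 2 ^ (x.primeFactorsList.length - 1) := by
          simpa using hqN
        have h2 := Nat.Prime.dvd_of_dvd_pow hq h1
        have := Nat.le_of_dvd (by norm_num) h2
        omega
    obtain ⟨p, hp, hpx, hp2⟩ := hxodd
    have hpodd : p % 2 = 1 := (Nat.Prime.eq_two_or_odd hp).resolve_left hp2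
    have hp3 : 3 ≤ p := by have := hp.two_le; omega
    -- every odd prime dividing x equals p
    have huniq : ∀ s, s.Prime → s ∣ x → s ≠ 2 → s = p := by
      intro s hs hsx hs2
      by_contra hsp
      have hco : Nat.Coprime s p := (Nat.coprime_primes hs hp).2 hsp
      have hsp_dvd : s * p ∣ x := Nat.Coprime.mul_dvd_of_dvd_of_dvd hco hsx hpx
      have hsodd : s % 2 = 1 := by
        rcases Nat.Prime.eq_two_or_odd hs with h | h
        · exact absurd h hs2
        · exact h
      have hs3 : 3 ≤ s := by have := hs.two_le; omega
      have h4 : 4 ∣ Nat.totient (s * p) := by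
        rw [Nat.totient_mul hco, Nat.totient_prime hs, Nat.totient_prime hp]
        obtain ⟨a, ha⟩ : ∃ a, s - 1 = 2 * a := ⟨(s - 1) / 2, by omega⟩
        obtain ⟨a2, ha2⟩ : ∃ a2, p - 1 = 2 * a2 := ⟨(p - 1) / 2, by omega⟩
        exact ⟨a * a2, by rw [ha, ha2]; ring⟩
      exact hN4 (h4.trans (hφ ▸ Nat.totient_dvd_of_dvd hsp_dvd))
    -- 4 does not divide x
    have hcop2 : Nat.Coprime 2 p := (Nat.coprime_primes Nat.prime_two hp).2 (Ne.symm hp2)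
    have hx4 : ¬ 4 ∣ x := by
      intro h4x
      have hco4 : Nat.Coprime 4 p := by
        have := Nat.Coprime.pow_left 2 hcop2
        norm_num at this
        exact this
      have h4p : 4 * p ∣ x := Nat.Coprime.mul_dvd_of_dvd_of_dvd hco4 h4x hpx
      have h4 : 4 ∣ Nat.totient (4 * p) := by
        rw [Nat.totient_mul hco4, Nat.totient_prime hp]
        have h4t : Nat.totient 4 = 2 := by decide
        rw [h4t]
        obtain ⟨a2, ha2⟩ : ∃ a2, p - 1 = 2 * a2 := ⟨(p - 1) / 2, by omega⟩
        exact ⟨a2, by rw [ha2]; ring⟩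
      exact hN4 (h4.trans (hφ ▸ Nat.totient_dvd_of_dvd h4p))
    -- decompose x = p ^ b * c
    set b := x.factorization p with hb
    set c := (ordCompl[p] x : ℕ) with hc
    have hxeq : p ^ b * c = x := Nat.ordProj_mul_ordCompl_eq_self x p
    have hb1 : 1 ≤ b := hp.factorization_pos_of_dvd hx0.ne' hpx
    have hcp : Nat.Coprime p c := Nat.coprime_ordCompl hp hx0.ne'
    have hc0 : c ≠ 0 := (Nat.ordCompl_pos p hx0.ne').ne'
    have hcdvd : c ∣ x := Nat.ordCompl_dvd x p
    have hc12 : c = 1 ∨ c = 2 := by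
      rcases eq_or_ne c 1 with h1 | h1
      · left; exact h1
      · right
        have hc2 : c = 2 ^ c.primeFactorsList.length := by
          apply Nat.eq_prime_pow_of_unique_prime_dvd hc0
          intro d hd hdc
          by_contra hd2
          have hdp : d = p := huniq d hd (hdc.trans hcdvd) hd2
          subst hdp
          exact Nat.Prime.one_lt hp |>.ne' (Nat.Coprime.eq_one_of_dvd hcp hdc)
        have hL : c.primeFactorsList.length ≤ 1 := by
          by_contra hL
          push_neg at hL
          have h4c : 4 ∣ c := by
            rw [hc2]
            have h := pow_dvd_pow 2 (show 2 ≤ c.primeFactorsList.length by omega)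
            simpa using h
          exact hx4 (h4c.trans hcdvd)
        have : c.primeFactorsList.length = 0 ∨ c.primeFactorsList.length = 1 := by omega
        rcases this with h | h
        · rw [h] at hc2; simp at hc2; exact absurd hc2 h1
        · rw [h] at hc2; simpa using hc2
    -- totient equation
    have hφx : p ^ (b - 1) * (p - 1) = N := by
      rcases hc12 with h | h
      · rw [← hxeq, h, mul_one, Nat.totient_prime_pow hp hb1] at hφ
        exact hφ
      · rw [← hxeq, h, Nat.totient_mul (Nat.Coprime.pow_left b hcop2.symm),
          Nat.totient_prime_pow hp hb1, Nat.totient_two, mul_one] at hφ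
        exact hφ
    have hxle : x ≤ 2 * p ^ b := by
      rw [← hxeq]
      rcases hc12 with h | h <;> rw [h] <;> nlinarith [pow_pos (show 0 < p by omega) b]
    rcases eq_or_ne p q with hpq | hpq
    · subst hpq
      have hcancel : p ^ (b - 1) = p ^ r :=
        Nat.eq_of_mul_eq_mul_right (by omega) hφx
      have hbr : b - 1 = r := Nat.pow_right_injective (by omega) hcancel
      have : b = r + 1 := by omega
      rw [this] at hxle
      exact hxle
    · have hcoqp : Nat.Coprime q p := (Nat.coprime_primes hq hp).2 (Ne.symm hpq)
      have hqrN : q ^ r ∣ N := Dvd.intro _ rfl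
      have hqrdvd : q ^ r ∣ p ^ (b - 1) * (p - 1) := hφx ▸ hqrN
      have hco_pows : Nat.Coprime (q ^ r) (p ^ (b - 1)) :=
        Nat.Coprime.pow r (b - 1) hcoqp
      have hqp1 : q ^ r ∣ p - 1 := (Nat.Coprime.dvd_of_dvd_mul_left hco_pows) hqrdvd
      have h1 : q ^ r ≤ p - 1 := Nat.le_of_dvd (by omega) hqp1
      have h2 : p ^ (b - 1) ≤ q - 1 := by
        have hle : p ^ (b - 1) * (p - 1) ≤ (q - 1) * (p - 1) := by
          rw [hφx, hN]
          calc q ^ r * (q - 1) ≤ (p - 1) * (q - 1) := Nat.mul_le_mul_right (q - 1) h1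
          _ = (q - 1) * (p - 1) := mul_comm _ _
        exact Nat.le_of_mul_le_mul_right hle (by omega)
      have hqqr : q ≤ q ^ r := Nat.le_self_pow (by omega) q
      have hbeq : b = 1 := by
        by_contra hb2
        have hble : 2 ≤ b := by omega
        have : p = p ^ 1 := (pow_one p).symm
        have hpp : p ≤ p ^ (b - 1) := by
          calc p = p ^ 1 := (pow_one p).symm
          _ ≤ p ^ (b - 1) := Nat.pow_le_pow_right (by omega) (by omega)
        omega
      rw [hbeq] at hφx hxle
      simp at hφx
      -- p - 1 = N, so p = N + 1
      have hpN : p = N + 1 := by omega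
      have hqr1 : 1 ≤ q ^ r := Nat.one_le_pow _ _ (by omega)
      have hqpow : q ^ (r + 1) = q ^ r * (q - 1) + q ^ r := by
        obtain ⟨u, hu⟩ : ∃ u, q = u + 1 := ⟨q - 1, by omega⟩
        have h2 : q - 1 = u := by omega
        rw [pow_succ, h2, hu]; ring
      simp only [pow_one] at hxle
      rw [hN] at hpN
      omega
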